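/- Let L be the proper loss with Savage/Schervish representation L(p,y) = −F(p) − ⟨∇F(p), y − p⟩ for p ∈ Δ^k, y ∈ ℝ^k, and define the risk R(g) = E[L(g(X), Y)]. Then the risk decomposes as R(g) = CE_F(g) + REF_F(g), i.e. E[L(g(X),Y)] = E[D_F(E[Y|g(X)], g(X))] + E[−F(E[Y|g(X)])]. -/

import Mathlib

open MeasureTheory ProbabilityTheory
open scoped RealInnerProductSpace

/-- Bregman divergence generated by `F`. -/
noncomputable def breg {k : ℕ} (F : EuclideanSpace ℝ (Fin k) → ℝ)
    (p q : EuclideanSpace ℝ (Fin k)) : ℝ :=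
  F p - F q - ⟪gradient F q, p - q⟫

/-- The probability simplex in `ℝ^k`. -/
def simplexE (k : ℕ) : Set (EuclideanSpace ℝ (Fin k)) :=
  {p | (∀ i, 0 ≤ p i) ∧ ∑ i, p i = 1}

lemma simplexE_isCompact (k : ℕ) : IsCompact (simplexE k) := by
  have h : IsCompact (stdSimplex ℝ (Fin k)) := isCompact_stdSimplex _ _
  have hs : simplexE k = (EuclideanSpace.equiv (Fin k) ℝ).toHomeomorph ⁻¹' stdSimplex ℝ (Fin k) :=
    rfl
  rw [hs]
  exact (EuclideanSpace.equiv (Fin k) ℝ).toHomeomorph.isCompact_preimage.mpr h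

lemma coord_abs_le_norm {k : ℕ} (x : EuclideanSpace ℝ (Fin k)) (i : Fin k) : |x i| ≤ ‖x‖ := by
  have h : x i = ⟪EuclideanSpace.single i (1:ℝ), x⟫ := by
    simp [EuclideanSpace.inner_single_left]
  rw [h]
  simpa using abs_real_inner_le_norm (EuclideanSpace.single i (1:ℝ)) x

lemma grad_meas {k : ℕ} (F : EuclideanSpace ℝ (Fin k) → ℝ) : Measurable (gradient F) := by
  have : gradient F
      = fun x => (InnerProductSpace.toDual ℝ (EuclideanSpace ℝ (Fin k))).symm (fderiv ℝ F x) := rfl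
  rw [this]
  exact (InnerProductSpace.toDual ℝ (EuclideanSpace ℝ (Fin k))).symm.continuous.measurable.comp
    (measurable_fderiv ℝ F)


theorem aux_decomp {Ω : Type*} {mΩ : MeasurableSpace Ω} (m : MeasurableSpace Ω) (hm : m ≤ mΩ)
    (μ : @MeasureTheory.Measure Ω mΩ) [IsProbabilityMeasure μ] {k : ℕ}
    (G Y : Ω → EuclideanSpace ℝ (Fin k)) (F : EuclideanSpace ℝ (Fin k) → ℝ)
    (hY : Measurable[mΩ] Y) (hG : Measurable[mΩ] G) (hGm : Measurable[m] G)
    (hYoh : ∀ ω, ∃ i, Y ω = EuclideanSpace.single i 1)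
    (hGs : ∀ ω, G ω ∈ simplexE k)
    (hF : ConvexOn ℝ Set.univ F)
    (hFc : ContinuousOn F (simplexE k))
    (hgFc : ContinuousOn (gradient F) (simplexE k)) :
    ∫ ω, (-(F (G ω)) - ⟪gradient F (G ω), Y ω - G ω⟫) ∂μ
      = (∫ ω, breg F ((μ[Y | m]) ω) (G ω) ∂μ) + ∫ ω, -(F ((μ[Y | m]) ω)) ∂μ := by
  classical
  letI : MeasurableSpace Ω := mΩ
  haveI : SigmaFinite (μ.trim hm) := (isFiniteMeasure_trim hm).toSigmaFinite
  set W : Ω → EuclideanSpace ℝ (Fin k) := fun ω => gradient F (G ω) with hW_def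
  have hWmeas : Measurable[mΩ] W := (grad_meas F).comp hG
  have hWm : Measurable[m] W := (grad_meas F).comp hGm
  set Z : Ω → EuclideanSpace ℝ (Fin k) := μ[Y | m] with hZ_def
  have hZint : Integrable Z μ := integrable_condExp
  have hZsm : StronglyMeasurable[m] Z := stronglyMeasurable_condExp
  -- bounds
  obtain ⟨CF, hCF⟩ := (simplexE_isCompact k).exists_bound_of_continuousOn hFc
  obtain ⟨Cg, hCg⟩ := (simplexE_isCompact k).exists_bound_of_continuousOn hgFc
  obtain ⟨Cs, hCs⟩ := (simplexE_isCompact k).exists_bound_of_continuousOn continuousOn_id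
  have hYnorm : ∀ ω, ‖Y ω‖ = 1 := by
    intro ω
    obtain ⟨i, hi⟩ := hYoh ω
    rw [hi]
    simpa using EuclideanSpace.norm_single i (1:ℝ)
  have hYint : Integrable Y μ :=
    ⟨hY.aestronglyMeasurable,
      HasFiniteIntegral.of_bounded (C := 1) (Filter.Eventually.of_forall fun ω => (hYnorm ω).le)⟩
  have hYc : ∀ i ω, |Y ω i| ≤ 1 := fun i ω => (coord_abs_le_norm (Y ω) i).trans (hYnorm ω).le
  have hWc : ∀ i ω, |W ω i| ≤ Cg := fun i ω =>
    (coord_abs_le_norm (W ω) i).trans (hCg (G ω) (hGs ω))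
  -- coordinate functions
  have hYci : ∀ i : Fin k, Integrable (fun ω => Y ω i) μ := by
    intro i
    refine ⟨(((EuclideanSpace.proj i : _ →L[ℝ] ℝ).continuous.measurable.comp hY)).aestronglyMeasurable, ?_⟩
    exact HasFiniteIntegral.of_bounded (C := 1)
      (Filter.Eventually.of_forall fun ω => by simpa [Real.norm_eq_abs] using hYc i ω)
  have hZci : ∀ i : Fin k, Integrable (fun ω => Z ω i) μ := fun i =>
    (EuclideanSpace.proj i : _ →L[ℝ] ℝ).integrable_comp hZint
  -- coordinates of the condexp
  have hL1 : ∀ i : Fin k, (fun ω => Z ω i) =ᵐ[μ] μ[fun ω => Y ω i | m] := by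
    intro i
    refine ae_eq_condExp_of_forall_setIntegral_eq hm (hYci i)
      (fun s _ _ => (hZci i).integrableOn) (fun s hs hμs => ?_) ?_
    · have h1 : ∫ ω in s, Z ω ∂μ = ∫ ω in s, Y ω ∂μ := setIntegral_condExp hm hYint hs
      have h2 : ∫ x in s, Z x i ∂μ
          = (EuclideanSpace.proj i : EuclideanSpace ℝ (Fin k) →L[ℝ] ℝ) (∫ x in s, Z x ∂μ) :=
        ContinuousLinearMap.integral_comp_comm (EuclideanSpace.proj i) (hZint.integrableOn (s := s))
      have h3 : ∫ x in s, Y x i ∂μ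
          = (EuclideanSpace.proj i : EuclideanSpace ℝ (Fin k) →L[ℝ] ℝ) (∫ x in s, Y x ∂μ) :=
        ContinuousLinearMap.integral_comp_comm (EuclideanSpace.proj i) (hYint.integrableOn (s := s))
      rw [h2, h3, h1]
    · exact (((EuclideanSpace.proj i : _ →L[ℝ] ℝ).continuous.comp_stronglyMeasurable
        hZsm)).aestronglyMeasurable
  -- Z lands in the simplex a.e.
  have hZnn : ∀ᵐ ω ∂μ, ∀ i, 0 ≤ Z ω i := by
    rw [ae_all_iff]
    intro i
    have h0 : 0 ≤ᵐ[μ] μ[fun ω => Y ω i | m] :=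
      condExp_nonneg (Filter.Eventually.of_forall fun ω => by
        obtain ⟨j, hj⟩ := hYoh ω
        show (0:ℝ) ≤ Y ω i
        rw [hj]
        simp only [EuclideanSpace.single_apply]
        split <;> norm_num)
    filter_upwards [hL1 i, h0] with ω h1 h2
    rw [h1]; exact h2
  have hZsum : ∀ᵐ ω ∂μ, ∑ i, Z ω i = 1 := by
    have hsum : (∑ i, fun ω => Y ω i) = fun _ => (1 : ℝ) := by
      funext ω
      obtain ⟨j, hj⟩ := hYoh ω
      simp only [Finset.sum_apply]
      rw [show (fun i => Y ω i) = fun i => (EuclideanSpace.single j (1:ℝ)) i by rw [hj]]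
      simp [EuclideanSpace.single_apply]
    have h1 : μ[∑ i, fun ω => Y ω i | m] =ᵐ[μ] ∑ i, μ[fun ω => Y ω i | m] :=
      condExp_finsetSum (fun i _ => hYci i) m
    have h2 : μ[∑ i, fun ω => Y ω i | m] =ᵐ[μ] fun _ => (1:ℝ) := by
      rw [hsum, condExp_const hm (1:ℝ)]
    have h3 : (fun ω => ∑ i, Z ω i) =ᵐ[μ] ∑ i, μ[fun ω => Y ω i | m] := by
      have hall : ∀ᵐ ω ∂μ, ∀ i, Z ω i = (μ[fun ω' => Y ω' i | m]) ω := by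
        rw [ae_all_iff]; intro i; exact hL1 i
      filter_upwards [hall] with ω hω
      simp only [Finset.sum_apply]
      exact Finset.sum_congr rfl fun i _ => hω i
    filter_upwards [h3, h1.symm.trans h2] with ω hω h1ω
    rw [hω]; exact h1ω
  have hZae : ∀ᵐ ω ∂μ, Z ω ∈ simplexE k := by
    filter_upwards [hZnn, hZsum] with ω h1 h2
    exact ⟨h1, h2⟩
  -- continuity/measurability of F
  have hFcontG : Continuous F :=
    continuousOn_univ.mp (hF.continuousOn isOpen_univ)
  -- integrabilities
  have hFG_int : Integrable (fun ω => F (G ω)) μ :=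
    ⟨(hFcontG.measurable.comp hG).aestronglyMeasurable,
      HasFiniteIntegral.of_bounded (C := CF)
        (Filter.Eventually.of_forall fun ω => hCF (G ω) (hGs ω))⟩
  have hFZ_int : Integrable (fun ω => F (Z ω)) μ := by
    refine ⟨(hFcontG.measurable.comp (hZsm.mono hm).measurable).aestronglyMeasurable, ?_⟩
    refine HasFiniteIntegral.of_bounded (C := CF) ?_
    filter_upwards [hZae] with ω hω
    exact hCF (Z ω) hω
  have hWY_int : Integrable (fun ω => ⟪W ω, Y ω⟫) μ := by
    refine ⟨(hWmeas.inner hY).aestronglyMeasurable, ?_⟩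
    refine HasFiniteIntegral.of_bounded (C := Cg * 1) (Filter.Eventually.of_forall fun ω => ?_)
    refine (abs_real_inner_le_norm _ _).trans ?_
    exact mul_le_mul (hCg (G ω) (hGs ω)) (hYnorm ω).le (norm_nonneg _)
      ((norm_nonneg (W ω)).trans (hCg (G ω) (hGs ω)))
  have hWG_int : Integrable (fun ω => ⟪W ω, G ω⟫) μ := by
    refine ⟨(hWmeas.inner hG).aestronglyMeasurable, ?_⟩
    refine HasFiniteIntegral.of_bounded (C := Cg * Cs) (Filter.Eventually.of_forall fun ω => ?_)
    refine (abs_real_inner_le_norm _ _).trans ?_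
    exact mul_le_mul (hCg (G ω) (hGs ω)) (by simpa using hCs (G ω) (hGs ω))
      (norm_nonneg _) ((norm_nonneg (W ω)).trans (hCg (G ω) (hGs ω)))
  have hWZi_int : ∀ i : Fin k, Integrable (fun ω => W ω i * Z ω i) μ := by
    intro i
    exact (hZci i).bdd_mul
      (((EuclideanSpace.proj i : _ →L[ℝ] ℝ).continuous.measurable.comp hWmeas).aestronglyMeasurable)
      (Filter.Eventually.of_forall fun ω => by simpa [Real.norm_eq_abs] using hWc i ω)
  have hWYi_int : ∀ i : Fin k, Integrable (fun ω => W ω i * Y ω i) μ := by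
    intro i
    exact (hYci i).bdd_mul
      (((EuclideanSpace.proj i : _ →L[ℝ] ℝ).continuous.measurable.comp hWmeas).aestronglyMeasurable)
      (Filter.Eventually.of_forall fun ω => by simpa [Real.norm_eq_abs] using hWc i ω)
  have hWZ_int : Integrable (fun ω => ⟪W ω, Z ω⟫) μ := by
    have : (fun ω => ⟪W ω, Z ω⟫) = fun ω => ∑ i, W ω i * Z ω i := by
      funext ω
      simp [PiLp.inner_apply, RCLike.inner_apply, conj_trivial, mul_comm]
    rw [this]
    exact integrable_finset_sum _ fun i _ => hWZi_int i
  -- key swap : ∫ ⟪W, Y⟫ = ∫ ⟪W, Z⟫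
  have hkey : ∫ ω, ⟪W ω, Y ω⟫ ∂μ = ∫ ω, ⟪W ω, Z ω⟫ ∂μ := by
    have hinnerY : (fun ω => ⟪W ω, Y ω⟫) = fun ω => ∑ i, W ω i * Y ω i := by
      funext ω; simp [PiLp.inner_apply, RCLike.inner_apply, conj_trivial, mul_comm]
    have hinnerZ : (fun ω => ⟪W ω, Z ω⟫) = fun ω => ∑ i, W ω i * Z ω i := by
      funext ω; simp [PiLp.inner_apply, RCLike.inner_apply, conj_trivial, mul_comm]
    rw [hinnerY, hinnerZ, integral_finset_sum _ (fun i _ => hWYi_int i),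
      integral_finset_sum _ (fun i _ => hWZi_int i)]
    refine Finset.sum_congr rfl fun i _ => ?_
    have hWi_sm : StronglyMeasurable[m] (fun ω => W ω i) :=
      ((EuclideanSpace.proj i : _ →L[ℝ] ℝ).continuous.measurable.comp hWm).stronglyMeasurable
    have hpull : μ[(fun ω => W ω i) * (fun ω => Y ω i) | m]
        =ᵐ[μ] (fun ω => W ω i) * μ[fun ω => Y ω i | m] :=
      condExp_stronglyMeasurable_mul_of_bound hm hWi_sm (hYci i) Cg
        (Filter.Eventually.of_forall fun ω => by simpa [Real.norm_eq_abs] using hWc i ω)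
    calc ∫ ω, W ω i * Y ω i ∂μ
        = ∫ ω, ((fun ω => W ω i) * fun ω => Y ω i) ω ∂μ := rfl
      _ = ∫ ω, (μ[(fun ω => W ω i) * (fun ω => Y ω i) | m]) ω ∂μ := (integral_condExp hm).symm
      _ = ∫ ω, ((fun ω => W ω i) * μ[fun ω => Y ω i | m]) ω ∂μ := integral_congr_ae hpull
      _ = ∫ ω, W ω i * Z ω i ∂μ := by
          refine integral_congr_ae ?_
          filter_upwards [hL1 i] with ω hω
          simp only [Pi.mul_apply]
          rw [hω]
  -- rewrite both sides
  have hA_int : Integrable (fun ω => -(F (G ω)) + ⟪W ω, G ω⟫) μ := hFG_int.neg.add hWG_int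
  have hLHS : ∫ ω, (-(F (G ω)) - ⟪W ω, Y ω - G ω⟫) ∂μ
      = (∫ ω, (-(F (G ω)) + ⟪W ω, G ω⟫) ∂μ) - ∫ ω, ⟪W ω, Y ω⟫ ∂μ := by
    have h : ∫ ω, ((-(F (G ω)) + ⟪W ω, G ω⟫) - ⟪W ω, Y ω⟫) ∂μ
        = (∫ ω, (-(F (G ω)) + ⟪W ω, G ω⟫) ∂μ) - ∫ ω, ⟪W ω, Y ω⟫ ∂μ :=
      integral_sub hA_int hWY_int
    rw [← h]
    refine integral_congr_ae (Filter.Eventually.of_forall fun ω => ?_)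
    simp only [inner_sub_right]
    ring
  have hRHS : (∫ ω, breg F (Z ω) (G ω) ∂μ) + ∫ ω, -(F (Z ω)) ∂μ
      = (∫ ω, (-(F (G ω)) + ⟪W ω, G ω⟫) ∂μ) - ∫ ω, ⟪W ω, Z ω⟫ ∂μ := by
    have hbreg_int : Integrable (fun ω => breg F (Z ω) (G ω)) μ := by
      have : (fun ω => breg F (Z ω) (G ω))
          = fun ω => F (Z ω) - F (G ω) - (⟪W ω, Z ω⟫ - ⟪W ω, G ω⟫) := by
        funext ω
        simp only [breg, inner_sub_right]
        rfl
      rw [this]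
      exact (hFZ_int.sub hFG_int).sub (hWZ_int.sub hWG_int)
    have hadd : ∫ ω, (breg F (Z ω) (G ω) + -(F (Z ω))) ∂μ
        = (∫ ω, breg F (Z ω) (G ω) ∂μ) + ∫ ω, -(F (Z ω)) ∂μ :=
      integral_add hbreg_int hFZ_int.neg
    have hsub : ∫ ω, ((-(F (G ω)) + ⟪W ω, G ω⟫) - ⟪W ω, Z ω⟫) ∂μ
        = (∫ ω, (-(F (G ω)) + ⟪W ω, G ω⟫) ∂μ) - ∫ ω, ⟪W ω, Z ω⟫ ∂μ :=
      integral_sub hA_int hWZ_int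
    rw [← hadd, ← hsub]
    refine integral_congr_ae (Filter.Eventually.of_forall fun ω => ?_)
    simp only [breg, inner_sub_right]
    ring
  calc ∫ ω, (-(F (G ω)) - ⟪W ω, Y ω - G ω⟫) ∂μ
      = (∫ ω, (-(F (G ω)) + ⟪W ω, G ω⟫) ∂μ) - ∫ ω, ⟪W ω, Y ω⟫ ∂μ := hLHS
    _ = (∫ ω, (-(F (G ω)) + ⟪W ω, G ω⟫) ∂μ) - ∫ ω, ⟪W ω, Z ω⟫ ∂μ := by rw [hkey]
    _ = (∫ ω, breg F (Z ω) (G ω) ∂μ) + ∫ ω, -(F (Z ω)) ∂μ := hRHS.symm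

/-- the risk of a proper loss with Savage/Schervish representation
decomposes into proper calibration error plus refinement. -/
theorem risk_eq_calibration_add_refinement
    {Ω 𝒳 : Type*} [MeasurableSpace Ω] [MeasurableSpace 𝒳]
    (μ : Measure Ω) [IsProbabilityMeasure μ] {k : ℕ}
    (X : Ω → 𝒳) (Y : Ω → EuclideanSpace ℝ (Fin k))
    (g : 𝒳 → EuclideanSpace ℝ (Fin k))
    (F : EuclideanSpace ℝ (Fin k) → ℝ)
    (hX : Measurable X) (hY : Measurable Y) (hg : Measurable g)
    (hYoh : ∀ ω, ∃ i, Y ω = EuclideanSpace.single i 1)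
    (hgs : ∀ x, g x ∈ simplexE k)
    (U : Set (EuclideanSpace ℝ (Fin k))) (hU : IsOpen U) (hUs : simplexE k ⊆ U)
    (hF : ConvexOn ℝ Set.univ F)
    (hFd : ∀ p ∈ U, DifferentiableAt ℝ F p)
    (hFc : ContinuousOn F (simplexE k))
    (hgFc : ContinuousOn (gradient F) (simplexE k)) :
    ∫ ω, (-(F (g (X ω))) - ⟪gradient F (g (X ω)), Y ω - g (X ω)⟫) ∂μ
      = (∫ ω, breg F
            ((μ[Y | MeasurableSpace.comap (fun ω' => g (X ω')) inferInstance]) ω)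
            (g (X ω)) ∂μ)
        + ∫ ω, -(F ((μ[Y | MeasurableSpace.comap (fun ω' => g (X ω')) inferInstance]) ω)) ∂μ := by
  have hG : Measurable (fun ω => g (X ω)) := hg.comp hX
  exact aux_decomp _ hG.comap_le μ (fun ω => g (X ω)) Y F hY hG
    (Measurable.of_comap_le le_rfl) hYoh (fun ω => hgs (X ω)) hF hFc hgFc
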